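/- Let Σ be a signature, V a set of variables and κ > 0 a cardinal, with V ∪ Σ₀ ≠ ∅. Every submultialgebra 𝒜 of mT(Σ, V, κ) is generated by its ground G(𝒜). -/

import Mathlib

universe u

/-- A `Σ`-multialgebra over the signature `S` (a family of sets of `n`-ary
function symbols) with universe `A`: each symbol is interpreted as a
multioperation returning a non-empty set of values. -/
structure MultiAlg (S : ℕ → Type u) (A : Type u) where
  op : ∀ {n : ℕ}, S n → (Fin n → A) → Set A
  op_nonempty : ∀ {n : ℕ} (σ : S n) (as : Fin n → A), (op σ as).Nonempty

namespace MultiAlg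

variable {S : ℕ → Type u} {A B : Type u}

/-- The build of a multialgebra: the union of all outputs of multioperations. -/
def build (M : MultiAlg S A) : Set A :=
  {a | ∃ (n : ℕ) (σ : S n) (as : Fin n → A), a ∈ M.op σ as}

/-- The ground of a multialgebra: its universe minus its build. -/
def ground (M : MultiAlg S A) : Set A := (M.build)ᶜ

/-- Homomorphisms of multialgebras. -/
def IsHom (M : MultiAlg S A) (N : MultiAlg S B) (f : A → B) : Prop :=
  ∀ {n : ℕ} (σ : S n) (as : Fin n → A), f '' M.op σ as ⊆ N.op σ (fun i => f (as i))

/-- Full homomorphisms of multialgebras. -/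
def IsFullHom (M : MultiAlg S A) (N : MultiAlg S B) (f : A → B) : Prop :=
  ∀ {n : ℕ} (σ : S n) (as : Fin n → A), f '' M.op σ as = N.op σ (fun i => f (as i))

/-- An isomorphism is a bijective full homomorphism. -/
def IsIso (M : MultiAlg S A) (N : MultiAlg S B) (f : A → B) : Prop :=
  IsFullHom M N f ∧ Function.Bijective f

/-- `N`, a multialgebra structure on the subset `Bc ⊆ A`, is a submultialgebra
of `M` if each of its multioperations is contained in the corresponding one of `M`. -/
def IsSubMultiAlg (M : MultiAlg S A) {Bc : Set A} (N : MultiAlg S ↥Bc) : Prop :=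
  ∀ {n : ℕ} (σ : S n) (bs : Fin n → ↥Bc),
    Subtype.val '' N.op σ bs ⊆ M.op σ (fun i => (bs i : A))

/-- The increasing family `⟨X⟩ₘ` of subsets generated by `X` in `M`. -/
def genFrom (M : MultiAlg S A) (X : Set A) : ℕ → Set A
  | 0 => X ∪ {a | ∃ σ : S 0, a ∈ M.op σ Fin.elim0}
  | m + 1 => genFrom M X m ∪
      {a | ∃ (n : ℕ) (σ : S n) (as : Fin n → A),
        (∀ i, as i ∈ genFrom M X m) ∧ a ∈ M.op σ as}

/-- The set `⟨X⟩` generated by `X` in `M`. -/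
def gen (M : MultiAlg S A) (X : Set A) : Set A := ⋃ m, M.genFrom X m

/-- `M` is generated by `X` if `⟨X⟩` is the whole universe. -/
def GeneratedBy (M : MultiAlg S A) (X : Set A) : Prop := M.gen X = Set.univ

/-- A multialgebra is disconnected when distinct multioperation instances
have disjoint outputs. -/
def Disconnected (M : MultiAlg S A) : Prop :=
  ∀ {n m : ℕ} (σ : S n) (θ : S m) (as : Fin n → A) (bs : Fin m → A),
    (M.op σ as ∩ M.op θ bs).Nonempty → n = m ∧ HEq σ θ ∧ HEq as bs

/-- A collection of choices from `M` to `N`: for every symbol `σ`, inputs in `A`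
and inputs in `B`, a function from `σ_M(as)` to `σ_N(bs)`. -/
structure ChoiceCol (M : MultiAlg S A) (N : MultiAlg S B) where
  choice : ∀ {n : ℕ} (σ : S n) (as : Fin n → A) (bs : Fin n → B),
    {a // a ∈ M.op σ as} → {b // b ∈ N.op σ bs}

/-- `M` is choice-dependent freely (cdf-) generated by `X ⊆ A`: for every
multialgebra `N`, function `f : X → B` and collection of choices `C`, there is
a unique homomorphism extending `f` and compatible with `C`. -/
def IsCdfGenerated (M : MultiAlg S A) (X : Set A) : Prop :=
  ∀ (B : Type u) [Nonempty B] (N : MultiAlg S B) (f : ↥X → B) (C : ChoiceCol M N),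
    ∃! g : A → B, IsHom M N g ∧ (∀ x : ↥X, g x = f x) ∧
      ∀ {n : ℕ} (σ : S n) (as : Fin n → A) (a : A) (ha : a ∈ M.op σ as),
        g a = (C.choice σ as (fun i => g (as i)) ⟨a, ha⟩).1

/-- A strong basis of `M` is a minimum generating set. -/
def IsStrongBasis (M : MultiAlg S A) (Bs : Set A) : Prop :=
  M.GeneratedBy Bs ∧ ∀ S' : Set A, M.GeneratedBy S' → Bs ⊆ S'

/-- A chain in `M`: a sequence in which each element belongs to the output of a
multioperation (of positive arity) having the next element among its inputs. -/
def IsChainSeq (M : MultiAlg S A) (a : ℕ → A) : Prop :=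
  ∀ k : ℕ, ∃ (m : ℕ) (σ : S (m + 1)) (cs : Fin (m + 1) → A) (j : Fin (m + 1)),
    cs j = a (k + 1) ∧ a k ∈ M.op σ cs

/-- A multialgebra is chainless when it has no chains. -/
def Chainless (M : MultiAlg S A) : Prop := ¬ ∃ a : ℕ → A, M.IsChainSeq a

/-- `M` satisfies the universal mapping property for the class of all
`Σ`-multialgebras over `X ⊆ A`. -/
def HasUMP (M : MultiAlg S A) (X : Set A) : Prop :=
  ∀ (B : Type u) [Nonempty B] (N : MultiAlg S B) (f : ↥X → B),
    ∃! g : A → B, IsHom M N g ∧ ∀ x : ↥X, g x = f x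

end MultiAlg

/-- Absolutely free terms over the signature `S` with variables `V`. -/
inductive MTerm (S : ℕ → Type u) (V : Type u) : Type u
  | var : V → MTerm S V
  | node : {n : ℕ} → S n → (Fin n → MTerm S V) → MTerm S V

/-- The expanded signature `Σ^κ`, with `Σₙ^κ = Σₙ × κ`. -/
def expSig (S : ℕ → Type u) (K : Type u) : ℕ → Type u := fun n => S n × K

/-- The `κ`-branching multialgebra of non-deterministic terms `mT(Σ, V, κ)`:
its universe is `T(Σ^κ, V)` and `σ(α₁,…,αₙ) = {σ^β α₁⋯αₙ : β ∈ κ}`. -/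
def mT (S : ℕ → Type u) (V : Type u) (K : Type u) [Nonempty K] :
    MultiAlg S (MTerm (expSig S K) V) where
  op {_} σ αs := {t | ∃ β : K, t = MTerm.node (σ, β) αs}
  op_nonempty {_} σ αs :=
    ⟨MTerm.node (σ, Classical.arbitrary K) αs, Classical.arbitrary K, rfl⟩


namespace MultiAlg

lemma genFrom_mono' {S : ℕ → Type u} {A : Type u} (M : MultiAlg S A) (X : Set A) :
    Monotone (M.genFrom X) :=
  monotone_nat_of_le_succ fun _ => Set.subset_union_left

lemma mem_gen_op' {S : ℕ → Type u} {A : Type u} (M : MultiAlg S A) (X : Set A)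
    {n : ℕ} (σ : S n) (as : Fin n → A) (h : ∀ i, as i ∈ M.gen X) {a : A}
    (ha : a ∈ M.op σ as) : a ∈ M.gen X := by
  have hch : ∀ i, ∃ m, as i ∈ M.genFrom X m := fun i => Set.mem_iUnion.1 (h i)
  choose g hg using hch
  have hall : ∀ i, as i ∈ M.genFrom X (Finset.univ.sup g) := fun i =>
    M.genFrom_mono' X (Finset.le_sup (Finset.mem_univ i)) (hg i)
  exact Set.mem_iUnion.2 ⟨Finset.univ.sup g + 1, Or.inr ⟨n, σ, as, hall, ha⟩⟩

end MultiAlg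

/-- Every submultialgebra `𝒜` of `mT(Σ, V, κ)` is generated by its
ground `G(𝒜)`. -/
theorem stmt3 (S : ℕ → Type u) (V K : Type u) [Nonempty K]
    (hVS : Nonempty V ∨ Nonempty (S 0))
    {Bc : Set (MTerm (expSig S K) V)} (hBc : Bc.Nonempty)
    (N : MultiAlg S ↥Bc) (hsub : MultiAlg.IsSubMultiAlg (mT S V K) N) :
    N.GeneratedBy N.ground := by
  have key : ∀ t : MTerm (expSig S K) V, ∀ ht : t ∈ Bc,
      (⟨t, ht⟩ : ↥Bc) ∈ N.gen N.ground := by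
    intro t
    induction t with
    | var v =>
      intro ht
      have hg : (⟨_, ht⟩ : ↥Bc) ∈ N.ground := by
        intro hb
        obtain ⟨n, σ, bs, hop⟩ := hb
        obtain ⟨β, hβ⟩ := hsub σ bs ⟨_, hop, rfl⟩
        cases hβ
      exact Set.mem_iUnion.2 ⟨0, Or.inl hg⟩
    | node p αs ih =>
      intro ht
      by_cases hb : (⟨_, ht⟩ : ↥Bc) ∈ N.build
      · obtain ⟨m, σ, bs, hop⟩ := hb
        obtain ⟨β, hβ⟩ := hsub σ bs ⟨_, hop, rfl⟩
        injection hβ with hn hp hαs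
        subst hn
        have hαs' : αs = fun i => (bs i : MTerm (expSig S K) V) := eq_of_heq hαs
        have hi : ∀ i, bs i ∈ N.gen N.ground := by
          intro i
          have hbi : bs i = ⟨αs i, by rw [hαs']; exact (bs i).2⟩ :=
            Subtype.ext (congrFun hαs' i).symm
          rw [hbi]
          exact ih i _
        exact N.mem_gen_op' N.ground σ bs hi hop
      · exact Set.mem_iUnion.2 ⟨0, Or.inl hb⟩
  exact Set.eq_univ_iff_forall.2 fun a => key a.1 a.2
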